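/- arXiv:1909.00015 — 8 statements merged into one kernel-verified Lean document; each statement's English description precedes it below -/
import Mathlib

section
/- Let α > 1 and z ∈ ℝ^d. There exists a unique τ* ∈ ℝ such that the vector p with coordinates p_i = [(α−1)z_i − τ*]_+^{1/(α−1)} satisfies Σ_i p_i = 1, and this vector p is the unique maximizer of p·z + H_α(p) over the probability simplex Δ^d, i.e., p = entmax_α(z). -/
/-- The probability simplex `Δ^d ⊆ ℝ^d`. -/
def probSimplex (d : ℕ) : Set (Fin d → ℝ) :=
  {p | (∀ j, 0 ≤ p j) ∧ ∑ j, p j = 1}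

/-- The Tsallis entropy `H_α(p) = (1/(α(α−1))) Σ_j (p_j − p_j^α)` (real power). -/
noncomputable def tsallisEntropy (d : ℕ) (α : ℝ) (p : Fin d → ℝ) : ℝ :=
  (1 / (α * (α - 1))) * ∑ j, (p j - p j ^ α)

/-- Strict tangent-line inequality for `t ↦ t ^ a` (strict convexity). -/
lemma rpow_tangent_lt {a : ℝ} (ha : 1 < a) {s t : ℝ} (hs : 0 < s) (ht : 0 ≤ t)
    (hts : t ≠ s) : s ^ a + a * s ^ (a - 1) * (t - s) < t ^ a := by
  have hx : -1 ≤ t / s - 1 := by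
    have := div_nonneg ht hs.le; linarith
  have hx' : t / s - 1 ≠ 0 := by
    intro h
    apply hts
    have : t / s = 1 := by linarith
    field_simp at this
    linarith
  have hb := one_add_mul_self_lt_rpow_one_add hx hx' ha
  have h1 : (1 + (t / s - 1)) = t / s := by ring
  rw [h1] at hb
  have hsa : (0:ℝ) < s ^ a := Real.rpow_pos_of_pos hs a
  have hmul := mul_lt_mul_of_pos_right hb hsa
  have hts' : (t / s) ^ a * s ^ a = t ^ a := by
    rw [← Real.mul_rpow (div_nonneg ht hs.le) hs.le, div_mul_cancel₀ _ hs.ne']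
  have hsub : s ^ (a - 1) = s ^ a / s := by
    rw [Real.rpow_sub hs, Real.rpow_one]
  have hLHS : (1 + a * (t / s - 1)) * s ^ a = s ^ a + a * s ^ (a - 1) * (t - s) := by
    rw [hsub]
    field_simp
  rw [hts', hLHS] at hmul
  exact hmul

/-- Let `α > 1` and `z ∈ ℝ^d`.  There is a unique `τ* ∈ ℝ` such that the vector
`p` with `p_i = [(α−1)z_i − τ*]_+^{1/(α−1)}` sums to one; and this vector `p`
is the unique maximizer of `p·z + H_α(p)` over the probability simplex, i.e.
`p = entmax_α(z)`. -/
theorem entmax_threshold_form (d : ℕ) (hd : 0 < d) (α : ℝ) (hα : 1 < α)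
    (z : Fin d → ℝ) :
    (∃! τ : ℝ, ∑ i, max ((α - 1) * z i - τ) 0 ^ (1 / (α - 1)) = 1) ∧
    ∀ τ : ℝ, (∑ i, max ((α - 1) * z i - τ) 0 ^ (1 / (α - 1)) = 1) →
      ((fun i => max ((α - 1) * z i - τ) 0 ^ (1 / (α - 1))) ∈ probSimplex d ∧
        (∀ q ∈ probSimplex d,
          ∑ i, q i * z i + tsallisEntropy d α q ≤
            ∑ i, (max ((α - 1) * z i - τ) 0 ^ (1 / (α - 1))) * z i +
              tsallisEntropy d α (fun i => max ((α - 1) * z i - τ) 0 ^ (1 / (α - 1)))) ∧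
        ∀ q ∈ probSimplex d,
          (∀ r ∈ probSimplex d,
            ∑ i, r i * z i + tsallisEntropy d α r ≤ ∑ i, q i * z i + tsallisEntropy d α q) →
          q = fun i => max ((α - 1) * z i - τ) 0 ^ (1 / (α - 1))) := by
  have hβ : 0 < α - 1 := by linarith
  have hκ : 0 < 1 / (α - 1) := by positivity
  have hne : (Finset.univ : Finset (Fin d)).Nonempty := by
    have : Nonempty (Fin d) := ⟨⟨0, hd⟩⟩
    exact Finset.univ_nonempty
  set f : ℝ → ℝ := fun τ => ∑ i, max ((α - 1) * z i - τ) 0 ^ (1 / (α - 1)) with hf_def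
  -- continuity of f
  have hcont : Continuous f := by
    apply continuous_finset_sum
    intro i _
    exact (Real.continuous_rpow_const hκ.le).comp
      (((continuous_const.sub continuous_id).max continuous_const))
  -- strict monotonicity where positive
  have hmono : ∀ τ₁ τ₂ : ℝ, τ₁ < τ₂ → f τ₂ = 1 → f τ₂ < f τ₁ := by
    intro τ₁ τ₂ h12 h1
    have hterm : ∀ i : Fin d, (0:ℝ) ≤ max ((α - 1) * z i - τ₂) 0 ^ (1 / (α - 1)) :=
      fun i => Real.rpow_nonneg (le_max_right _ _) _
    have hex : ∃ i : Fin d, 0 < max ((α - 1) * z i - τ₂) 0 ^ (1 / (α - 1)) := by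
      by_contra h
      push_neg at h
      have : f τ₂ ≤ 0 := Finset.sum_nonpos fun i _ => h i
      rw [h1] at this; linarith
    obtain ⟨i0, hi0⟩ := hex
    apply Finset.sum_lt_sum
    · intro i _
      apply Real.rpow_le_rpow (le_max_right _ _) _ hκ.le
      exact max_le_max (by linarith) le_rfl
    · refine ⟨i0, Finset.mem_univ i0, ?_⟩
      have hbase : 0 < (α - 1) * z i0 - τ₂ := by
        rcases le_or_gt ((α - 1) * z i0 - τ₂) 0 with h | h
        · rw [max_eq_right h, Real.zero_rpow hκ.ne'] at hi0; linarith
        · exact h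
      rw [max_eq_left hbase.le]
      have hbase1 : (α - 1) * z i0 - τ₂ < max ((α - 1) * z i0 - τ₁) 0 := by
        calc (α - 1) * z i0 - τ₂ < (α - 1) * z i0 - τ₁ := by linarith
        _ ≤ max ((α - 1) * z i0 - τ₁) 0 := le_max_left _ _
      exact Real.rpow_lt_rpow hbase.le hbase1 hκ
  -- existence of τ
  have hexist : ∃ τ : ℝ, f τ = 1 := by
    set M := Finset.univ.sup' hne fun i => (α - 1) * z i with hM
    set m := Finset.univ.inf' hne fun i => (α - 1) * z i with hm
    have hMle : ∀ i : Fin d, (α - 1) * z i ≤ M := by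
      intro i; rw [hM]; exact Finset.le_sup' (fun j => (α - 1) * z j) (Finset.mem_univ i)
    have hmle : ∀ i : Fin d, m ≤ (α - 1) * z i := by
      intro i; rw [hm]; exact Finset.inf'_le (fun j => (α - 1) * z j) (Finset.mem_univ i)
    have hmM : m - 1 ≤ M := by
      obtain ⟨i0, _⟩ := hne
      linarith [hmle i0, hMle i0]
    have hfM : f M = 0 := by
      apply Finset.sum_eq_zero
      intro i _
      have : (α - 1) * z i - M ≤ 0 := by linarith [hMle i]
      rw [max_eq_right this, Real.zero_rpow hκ.ne']
    have hfm : 1 ≤ f (m - 1) := by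
      have h1 : ∀ i ∈ Finset.univ,
          (1:ℝ) ≤ max ((α - 1) * z i - (m - 1)) 0 ^ (1 / (α - 1)) := by
        intro i _
        have hb : (1:ℝ) ≤ max ((α - 1) * z i - (m - 1)) 0 := by
          have h1 : (1:ℝ) ≤ (α - 1) * z i - (m - 1) := by linarith [hmle i]
          exact le_trans h1 (le_max_left _ _)
        calc (1:ℝ) = 1 ^ (1 / (α - 1)) := (Real.one_rpow _).symm
        _ ≤ max ((α - 1) * z i - (m - 1)) 0 ^ (1 / (α - 1)) :=
          Real.rpow_le_rpow zero_le_one hb hκ.le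
      have := Finset.sum_le_sum h1
      simp only [Finset.sum_const, Finset.card_univ, Fintype.card_fin, nsmul_eq_mul,
        mul_one] at this
      calc (1:ℝ) ≤ (d : ℝ) := by exact_mod_cast hd
      _ ≤ f (m - 1) := this
    have hsub := intermediate_value_Icc' hmM hcont.continuousOn
    have h1mem : (1:ℝ) ∈ Set.Icc (f M) (f (m - 1)) := ⟨by rw [hfM]; norm_num, hfm⟩
    obtain ⟨τ, _, hτ⟩ := hsub h1mem
    exact ⟨τ, hτ⟩
  obtain ⟨τ0, hτ0⟩ := hexist
  have huniq : ∀ τ₁ τ₂ : ℝ, f τ₁ = 1 → f τ₂ = 1 → τ₁ = τ₂ := by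
    intro τ₁ τ₂ h1 h2
    rcases lt_trichotomy τ₁ τ₂ with h | h | h
    · have := hmono τ₁ τ₂ h h2; rw [h1, h2] at this; linarith
    · exact h
    · have := hmono τ₂ τ₁ h h1; rw [h1, h2] at this; linarith
  constructor
  · exact ⟨τ0, hτ0, fun y hy => huniq y τ0 hy hτ0⟩
  -- main part: optimality
  intro τ hsum
  set p : Fin d → ℝ := fun i => max ((α - 1) * z i - τ) 0 ^ (1 / (α - 1)) with hp_def
  have hp0 : ∀ i, 0 ≤ p i := fun i => Real.rpow_nonneg (le_max_right _ _) _
  have hppow : ∀ i, p i ^ (α - 1) = max ((α - 1) * z i - τ) 0 := by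
    intro i
    rw [hp_def, ← Real.rpow_mul (le_max_right _ _), one_div_mul_cancel hβ.ne',
      Real.rpow_one]
  have hα0 : (0:ℝ) < α := by linarith
  have hc : (0:ℝ) < 1 / (α * (α - 1)) := by positivity
  -- abbreviations
  set c : ℝ := 1 / (α * (α - 1)) with hc_def
  set lam : ℝ := c + τ / (α - 1) with hlam_def
  -- the key strict per-coordinate inequality
  have keylt : ∀ i : Fin d, ∀ t : ℝ, 0 ≤ t → t ≠ p i →
      t * z i + c * (t - t ^ α) <
        p i * z i + c * (p i - p i ^ α) + lam * (t - p i) := by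
    intro i t ht hts
    rcases le_or_gt ((α - 1) * z i - τ) 0 with hb | hb
    · -- inactive coordinate : p i = 0
      have hpi : p i = 0 := by
        rw [hp_def]
        simp only
        rw [max_eq_right hb, Real.zero_rpow hκ.ne']
      have htpos : 0 < t := lt_of_le_of_ne ht (by rw [hpi] at hts; exact Ne.symm hts)
      have htα : 0 < t ^ α := Real.rpow_pos_of_pos htpos α
      have hz : z i ≤ τ / (α - 1) := by
        rw [le_div_iff₀ hβ]; nlinarith
      have h1 : t * z i ≤ t * (τ / (α - 1)) := mul_le_mul_of_nonneg_left hz ht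
      have h0α : (0:ℝ) ^ α = 0 := Real.zero_rpow (by positivity)
      rw [hpi, h0α]
      have hctα : 0 < c * t ^ α := mul_pos hc htα
      rw [hlam_def]
      nlinarith
    · -- active coordinate : p i > 0
      have hmax : max ((α - 1) * z i - τ) 0 = (α - 1) * z i - τ := max_eq_left hb.le
      have hpipos : 0 < p i := by
        rw [hp_def]; simp only; rw [hmax]; exact Real.rpow_pos_of_pos hb _
      have hpow : p i ^ (α - 1) = (α - 1) * z i - τ := by rw [hppow i, hmax]
      have htang := rpow_tangent_lt hα hpipos ht hts
      rw [hpow] at htang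
      have H := mul_lt_mul_of_pos_left htang hc
      have e1 : c * (α * ((α - 1) * z i - τ)) * (t - p i) =
          z i * (t - p i) - (τ / (α - 1)) * (t - p i) := by
        rw [hc_def]; field_simp
      have H2 : c * (p i ^ α) + (z i * (t - p i) - (τ / (α - 1)) * (t - p i)) <
          c * (t ^ α) := by
        calc c * (p i ^ α) + (z i * (t - p i) - (τ / (α - 1)) * (t - p i))
            = c * (p i ^ α + α * ((α - 1) * z i - τ) * (t - p i)) := by
              rw [← e1]; ring
          _ < c * (t ^ α) := H
      rw [hlam_def]
      nlinarith [H2]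
  have keyle : ∀ i : Fin d, ∀ t : ℝ, 0 ≤ t →
      t * z i + c * (t - t ^ α) ≤
        p i * z i + c * (p i - p i ^ α) + lam * (t - p i) := by
    intro i t ht
    rcases eq_or_ne t (p i) with h | h
    · subst h; simp
    · exact (keylt i t ht h).le
  -- rewriting the objective as a sum
  have Fsum : ∀ q : Fin d → ℝ,
      ∑ i, q i * z i + tsallisEntropy d α q =
        ∑ i, (q i * z i + c * (q i - q i ^ α)) := by
    intro q
    rw [tsallisEntropy, ← hc_def, Finset.mul_sum, ← Finset.sum_add_distrib]
  have hpmem : p ∈ probSimplex d := ⟨hp0, hsum⟩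
  -- the ≤ bound for any simplex member
  have hle : ∀ q ∈ probSimplex d,
      ∑ i, q i * z i + tsallisEntropy d α q ≤
        ∑ i, p i * z i + tsallisEntropy d α p := by
    intro q hq
    rw [Fsum q, Fsum p]
    calc ∑ i, (q i * z i + c * (q i - q i ^ α))
        ≤ ∑ i, ((p i * z i + c * (p i - p i ^ α)) + lam * (q i - p i)) :=
          Finset.sum_le_sum fun i _ => keyle i (q i) (hq.1 i)
      _ = ∑ i, (p i * z i + c * (p i - p i ^ α)) +
            lam * (∑ i, q i - ∑ i, p i) := by
          rw [Finset.sum_add_distrib, ← Finset.mul_sum, Finset.sum_sub_distrib]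
      _ = ∑ i, (p i * z i + c * (p i - p i ^ α)) := by
          rw [hq.2, hsum]; ring
  refine ⟨hpmem, hle, ?_⟩
  -- uniqueness of the maximizer
  intro q hq hmax
  by_contra hqp
  have hex : ∃ i, q i ≠ p i := Function.ne_iff.mp hqp
  obtain ⟨i0, hi0⟩ := hex
  have hlt : ∑ i, q i * z i + tsallisEntropy d α q <
      ∑ i, p i * z i + tsallisEntropy d α p := by
    rw [Fsum q, Fsum p]
    calc ∑ i, (q i * z i + c * (q i - q i ^ α))
        < ∑ i, ((p i * z i + c * (p i - p i ^ α)) + lam * (q i - p i)) := by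
          apply Finset.sum_lt_sum (fun i _ => keyle i (q i) (hq.1 i))
          exact ⟨i0, Finset.mem_univ i0, keylt i0 (q i0) (hq.1 i0) hi0⟩
      _ = ∑ i, (p i * z i + c * (p i - p i ^ α)) +
            lam * (∑ i, q i - ∑ i, p i) := by
          rw [Finset.sum_add_distrib, ← Finset.mul_sum, Finset.sum_sub_distrib]
      _ = ∑ i, (p i * z i + c * (p i - p i ^ α)) := by
          rw [hq.2, hsum]; ring
  have hge := hmax p hpmem
  linarith
end

section
/- For every z ∈ ℝ^d, there exists a unique τ ∈ ℝ such that the vector p with coordinates p_i = [z_i − τ]_+ satisfies Σ_i p_i = 1, and this p is the unique minimizer of ‖p − z‖₂² over the probability simplex Δ^d, i.e., p = sparsemax(z), the Euclidean projection of z onto Δ^d. -/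
lemma sparsemax_tau_unique {d : ℕ} (z : Fin d → ℝ) {τ₁ τ₂ : ℝ} (h : τ₁ < τ₂)
    (h1 : ∑ i, max (z i - τ₁) 0 = 1) (h2 : ∑ i, max (z i - τ₂) 0 = 1) : False := by
  have hle : ∀ i ∈ Finset.univ, max (z i - τ₂) 0 ≤ max (z i - τ₁) 0 :=
    fun i _ => max_le_max (by linarith) le_rfl
  have heq : ∀ i ∈ Finset.univ, max (z i - τ₂) 0 = max (z i - τ₁) 0 :=
    (Finset.sum_eq_sum_iff_of_le hle).mp (by rw [h1, h2])
  have hex : ∃ i, 0 < max (z i - τ₂) 0 := by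
    by_contra hc
    push_neg at hc
    have : ∑ i, max (z i - τ₂) 0 ≤ 0 := Finset.sum_nonpos (fun i _ => hc i)
    linarith
  obtain ⟨i, hi⟩ := hex
  have hzi : τ₂ < z i := by
    by_contra hc
    push_neg at hc
    rw [max_eq_right (by linarith : z i - τ₂ ≤ 0)] at hi
    exact lt_irrefl 0 hi
  have := heq i (Finset.mem_univ i)
  rw [max_eq_left (by linarith : (0:ℝ) ≤ z i - τ₂),
      max_eq_left (by linarith : (0:ℝ) ≤ z i - τ₁)] at this
  linarith

lemma sparsemax_key {d : ℕ} (z : Fin d → ℝ) (τ : ℝ)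
    (hsum : ∑ i, max (z i - τ) 0 = 1)
    (q : Fin d → ℝ) (hq0 : ∀ j, 0 ≤ q j) (hq1 : ∑ j, q j = 1) :
    ∑ i, (max (z i - τ) 0 - z i) ^ 2 + ∑ i, (q i - max (z i - τ) 0) ^ 2
      ≤ ∑ i, (q i - z i) ^ 2 := by
  have hpt : ∀ i, (max (z i - τ) 0 - z i) ^ 2 + (q i - max (z i - τ) 0) ^ 2
      + 2 * τ * (max (z i - τ) 0 - q i) ≤ (q i - z i) ^ 2 := by
    intro i
    have hq := hq0 i
    rcases le_or_gt τ (z i) with h | h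
    · rw [max_eq_left (by linarith : (0:ℝ) ≤ z i - τ)]
      nlinarith [sq_nonneg (q i - z i)]
    · rw [max_eq_right (by linarith : z i - τ ≤ 0)]
      nlinarith [mul_nonneg hq (le_of_lt (sub_pos.mpr h))]
  have hs := Finset.sum_le_sum (fun i (_ : i ∈ Finset.univ) => hpt i)
  have hexp : ∑ i, ((max (z i - τ) 0 - z i) ^ 2 + (q i - max (z i - τ) 0) ^ 2
      + 2 * τ * (max (z i - τ) 0 - q i))
      = ∑ i, (max (z i - τ) 0 - z i) ^ 2 + ∑ i, (q i - max (z i - τ) 0) ^ 2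
        + 2 * τ * ((∑ i, max (z i - τ) 0) - ∑ i, q i) := by
    rw [Finset.sum_add_distrib, Finset.sum_add_distrib, ← Finset.mul_sum,
      Finset.sum_sub_distrib]
  rw [hexp, hsum, hq1] at hs
  linarith

/-- For every `z ∈ ℝ^d`, there exists a unique `τ ∈ ℝ` such that the vector `p`
with coordinates `p_i = [z_i − τ]_+` sums to one, and this `p` is the unique
minimizer of `‖p − z‖₂²` over the probability simplex, i.e. `p = sparsemax(z)`,
the Euclidean projection of `z` onto the simplex. -/
theorem sparsemax_threshold_form (d : ℕ) (hd : 0 < d) (z : Fin d → ℝ) :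
    (∃! τ : ℝ, ∑ i, max (z i - τ) 0 = 1) ∧
    ∀ τ : ℝ, (∑ i, max (z i - τ) 0 = 1) →
      ((fun i => max (z i - τ) 0) ∈ probSimplex d ∧
        (∀ q ∈ probSimplex d,
          ∑ i, (max (z i - τ) 0 - z i) ^ 2 ≤ ∑ i, (q i - z i) ^ 2) ∧
        ∀ q ∈ probSimplex d,
          (∀ r ∈ probSimplex d, ∑ i, (q i - z i) ^ 2 ≤ ∑ i, (r i - z i) ^ 2) →
          q = fun i => max (z i - τ) 0) := by
  have hne : (Finset.univ : Finset (Fin d)).Nonempty := ⟨⟨0, hd⟩, Finset.mem_univ _⟩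
  constructor
  · -- existence and uniqueness of τ
    set f : ℝ → ℝ := fun τ => ∑ i, max (z i - τ) 0 with hf
    have hcont : Continuous f :=
      continuous_finset_sum _ fun i _ =>
        (continuous_const.sub continuous_id).max continuous_const
    set a := Finset.univ.inf' hne z - 1 with ha
    set b := Finset.univ.sup' hne z with hb
    have hab : a ≤ b := by
      have h1 := Finset.inf'_le z (Finset.mem_univ (⟨0, hd⟩ : Fin d))
      have h2 := Finset.le_sup' z (Finset.mem_univ (⟨0, hd⟩ : Fin d))
      rw [ha, hb]; linarith
    have hfb : f b = 0 := Finset.sum_eq_zero fun i _ =>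
      max_eq_right (by
        have := Finset.le_sup' z (Finset.mem_univ i)
        linarith)
    have hfa : 1 ≤ f a := by
      have h1 : ∀ i ∈ Finset.univ, (1:ℝ) ≤ max (z i - a) 0 := by
        intro i _
        have := Finset.inf'_le z (Finset.mem_univ i)
        have : (1:ℝ) ≤ z i - a := by rw [ha]; linarith
        exact le_max_of_le_left this
      calc (1:ℝ) ≤ ∑ _i : Fin d, (1:ℝ) / d := by
              rw [Finset.sum_const, Finset.card_univ, Fintype.card_fin]
              rw [nsmul_eq_mul]
              rw [mul_one_div, div_self (by positivity : (d:ℝ) ≠ 0)]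
        _ ≤ f a := by
              apply Finset.sum_le_sum
              intro i hi
              have := h1 i hi
              have hd1 : (1:ℝ) ≤ d := by exact_mod_cast hd
              have : (1:ℝ)/d ≤ 1 := by
                rw [div_le_one (by positivity)]; exact hd1
              linarith [h1 i hi]
    have hmem : (1:ℝ) ∈ Set.Icc (f b) (f a) := ⟨by rw [hfb]; norm_num, hfa⟩
    obtain ⟨τ, _, hτ⟩ := intermediate_value_Icc' hab hcont.continuousOn hmem
    refine ⟨τ, hτ, ?_⟩
    intro τ' hτ'
    rcases lt_trichotomy τ' τ with h | h | h
    · exact absurd (sparsemax_tau_unique z h hτ' hτ) id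
    · exact h
    · exact absurd (sparsemax_tau_unique z h hτ hτ') id
  · intro τ hτ
    set p : Fin d → ℝ := fun i => max (z i - τ) 0 with hp
    have hpmem : p ∈ probSimplex d := ⟨fun j => le_max_right _ _, hτ⟩
    refine ⟨hpmem, ?_, ?_⟩
    · intro q hq
      have := sparsemax_key z τ hτ q hq.1 hq.2
      have h2 : 0 ≤ ∑ i, (q i - p i) ^ 2 :=
        Finset.sum_nonneg fun i _ => sq_nonneg _
      linarith
    · intro q hq hmin
      have hkey := sparsemax_key z τ hτ q hq.1 hq.2
      have hle := hmin p hpmem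
      have hzero : ∑ i, (q i - p i) ^ 2 ≤ 0 := by linarith
      have heach : ∀ i ∈ Finset.univ, (q i - p i) ^ 2 = 0 := by
        rw [← Finset.sum_eq_zero_iff_of_nonneg (fun i _ => sq_nonneg _)]
        exact le_antisymm hzero (Finset.sum_nonneg fun i _ => sq_nonneg _)
      funext i
      have := heach i (Finset.mem_univ i)
      have : q i - p i = 0 := by
        exact pow_eq_zero_iff (by norm_num) |>.mp this
      linarith
end

section
/- For every α > 1 and every dimension d ≥ 2, there exists z ∈ ℝ^d such that entmax_α(z), the unique maximizer of p·z + H_α(p) over the probability simplex Δ^d, has at least one coordinate equal to exactly zero. In contrast, for every z ∈ ℝ^d, every coordinate of softmax(z) is strictly positive. -/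
/-- For every `α > 1` and every dimension `d ≥ 2`, there is a `z ∈ ℝ^d` such that
`entmax_α(z)` — a maximizer of `p·z + H_α(p)` over the probability simplex (which
is unique) — has at least one coordinate exactly zero.  In contrast, every
coordinate of `softmax(z)` is strictly positive for every `z`. -/
theorem entmax_can_be_sparse_softmax_cannot (d : ℕ) (hd : 2 ≤ d) (α : ℝ) (hα : 1 < α) :
    (∃ z : Fin d → ℝ, ∃ p : Fin d → ℝ,
      (p ∈ probSimplex d ∧
        ∀ q ∈ probSimplex d,
          ∑ i, q i * z i + tsallisEntropy d α q ≤
            ∑ i, p i * z i + tsallisEntropy d α p) ∧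
      ∃ i, p i = 0) ∧
    ∀ z : Fin d → ℝ, ∀ i : Fin d, 0 < Real.exp (z i) / ∑ j, Real.exp (z j) := by
  have hα0 : 0 < α := lt_trans one_pos hα
  have hαα : 0 < α * (α - 1) := mul_pos hα0 (by linarith)
  constructor
  · -- sparsity of entmax
    set i0 : Fin d := ⟨0, by omega⟩ with hi0
    set M : ℝ := (α + 1) / (α * (α - 1)) with hM
    refine ⟨fun j => if j = i0 then M else 0, fun j => if j = i0 then 1 else 0,
      ⟨⟨fun j => by positivity, by simp⟩, ?_⟩, ⟨1, by omega⟩, by simp [hi0, Fin.ext_iff]⟩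
    intro q hq
    obtain ⟨hq0, hq1⟩ := hq
    -- value at p
    have hp1 : (∑ i, (if i = i0 then (1:ℝ) else 0) * (if i = i0 then M else 0)) = M := by
      simp
    have hp2 : tsallisEntropy d α (fun j => if j = i0 then 1 else 0) = 0 := by
      unfold tsallisEntropy
      rw [Finset.sum_eq_zero, mul_zero]
      intro j _
      by_cases h : j = i0 <;> simp [h, Real.zero_rpow (ne_of_gt hα0)]
    rw [hp1, hp2, add_zero]
    have hq0le1 : ∀ j, q j ≤ 1 := by
      intro j
      calc q j = ∑ k ∈ {j}, q k := by simp
        _ ≤ ∑ k, q k := Finset.sum_le_sum_of_subset_of_nonneg (Finset.subset_univ _)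
            (fun k _ _ => hq0 k)
        _ = 1 := hq1
    -- linear part
    have hlin : (∑ i, q i * (if i = i0 then M else 0)) = q i0 * M := by
      rw [Finset.sum_eq_single i0]
      · simp
      · intro b _ hb; simp [hb]
      · simp
    -- entropy bound
    have hsum : (∑ j, (q j - q j ^ α)) ≤ (α + 1) * (1 - q i0) := by
      have hsplit : (∑ j, (q j - q j ^ α)) =
          (q i0 - q i0 ^ α) + ∑ j ∈ Finset.univ.erase i0, (q j - q j ^ α) :=
        (Finset.add_sum_erase _ _ (Finset.mem_univ i0)).symm
      have h1 : q i0 - q i0 ^ α ≤ α * (1 - q i0) := by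
        have hb : 1 + α * (q i0 - 1) ≤ (1 + (q i0 - 1)) ^ α :=
          one_add_mul_self_le_rpow_one_add (by linarith [hq0 i0]) hα.le
        have : (1 + (q i0 - 1)) = q i0 := by ring
        rw [this] at hb
        nlinarith [hq0 i0, hq0le1 i0]
      have h2 : (∑ j ∈ Finset.univ.erase i0, (q j - q j ^ α)) ≤ 1 - q i0 := by
        have hrest : (∑ j ∈ Finset.univ.erase i0, q j) = 1 - q i0 := by
          have := Finset.add_sum_erase Finset.univ q (Finset.mem_univ i0)
          rw [hq1] at this; linarith
        calc (∑ j ∈ Finset.univ.erase i0, (q j - q j ^ α))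
            ≤ ∑ j ∈ Finset.univ.erase i0, q j := by
              apply Finset.sum_le_sum
              intro j _
              have : (0:ℝ) ≤ q j ^ α := Real.rpow_nonneg (hq0 j) α
              linarith
          _ = 1 - q i0 := hrest
      linarith
    have hent : tsallisEntropy d α q ≤ M * (1 - q i0) := by
      unfold tsallisEntropy
      have h := mul_le_mul_of_nonneg_left hsum
        (le_of_lt (by positivity : (0:ℝ) < 1 / (α * (α - 1))))
      calc (1 / (α * (α - 1))) * ∑ j, (q j - q j ^ α)
          ≤ (1 / (α * (α - 1))) * ((α + 1) * (1 - q i0)) := h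
        _ = M * (1 - q i0) := by rw [hM]; field_simp
    rw [hlin]
    have hq0le := hq0le1 i0
    nlinarith [hαα]
  · -- softmax positivity
    intro z i
    apply div_pos (Real.exp_pos _)
    apply Finset.sum_pos (fun j _ => Real.exp_pos _)
    exact ⟨⟨0, by omega⟩, Finset.mem_univ _⟩
end

section
/- Let z ∈ ℝ^d and 1 < α ≤ α'. If the i-th coordinate of entmax_α(z) is zero, then the i-th coordinate of entmax_{α'}(z) is also zero; i.e., increasing α keeps sparse coordinates sparse. -/
open Filter Topology

/-- Tangent-line inequality for `x ↦ x^β`, `β ≥ 1`, from Bernoulli. -/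
lemma rpow_tangent {β : ℝ} (hβ : 1 ≤ β) {x y : ℝ} (hx : 0 ≤ x) (hy : 0 < y) :
    y ^ β + β * y ^ (β - 1) * (x - y) ≤ x ^ β := by
  have hs : (-1 : ℝ) ≤ x / y - 1 := by
    have : 0 ≤ x / y := div_nonneg hx hy.le
    linarith
  have hb := one_add_mul_self_le_rpow_one_add hs hβ
  have h1 : (1 + (x / y - 1)) = x / y := by ring
  rw [h1, Real.div_rpow hx hy.le] at hb
  have hyβ : (0:ℝ) < y ^ β := Real.rpow_pos_of_pos hy β
  have := mul_le_mul_of_nonneg_left hb hyβ.le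
  have h2 : y ^ β * (x ^ β / y ^ β) = x ^ β := by
    field_simp
  rw [h2] at this
  have h3 : y ^ (β - 1) = y ^ β / y := Real.rpow_sub_one hy.ne' β
  calc y ^ β + β * y ^ (β - 1) * (x - y)
      = y ^ β * (1 + β * (x / y - 1)) := by
        rw [h3]; field_simp
    _ ≤ x ^ β := this

/-- Sum over functions differing in two coordinates. -/
lemma sum_sub_two {d : ℕ} (F : Fin d → ℝ → ℝ) (q p : Fin d → ℝ) (i j : Fin d)
    (hij : i ≠ j) (h : ∀ k, k ≠ i → k ≠ j → q k = p k) :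
    ∑ k, F k (q k) = ∑ k, F k (p k) + (F i (q i) - F i (p i)) + (F j (q j) - F j (p j)) := by
  have key : ∑ k, (F k (q k) - F k (p k))
      = (F i (q i) - F i (p i)) + (F j (q j) - F j (p j)) := by
    have e : ∑ k, (F k (q k) - F k (p k))
        = ∑ k ∈ ({i, j} : Finset (Fin d)), (F k (q k) - F k (p k)) := by
      refine (Finset.sum_subset (Finset.subset_univ _) ?_).symm
      intro x _ hx
      simp only [Finset.mem_insert, Finset.mem_singleton, not_or] at hx
      rw [h x hx.1 hx.2, sub_self]
    rw [e, Finset.sum_pair hij]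
  have := Finset.sum_sub_distrib (s := Finset.univ)
    (f := fun k => F k (q k)) (g := fun k => F k (p k))
  linarith [key, this]

lemma gradA {d : ℕ} {γ : ℝ} (hγ : 1 < γ) {z p : Fin d → ℝ}
    (hps : p ∈ probSimplex d)
    (hmax : ∀ q ∈ probSimplex d,
      ∑ k, q k * z k + tsallisEntropy d γ q ≤ ∑ k, p k * z k + tsallisEntropy d γ p)
    {i j : Fin d} (hij : i ≠ j) (hpi : p i = 0) (hpj : 0 < p j) :
    p j ^ (γ - 1) ≤ (γ - 1) * (z j - z i) := by
  set b := p j with hb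
  have hγ0 : (0:ℝ) < γ := by linarith
  have hγ1 : (0:ℝ) < γ - 1 := by linarith
  have hne1 : γ - 1 ≠ 0 := hγ1.ne'
  have claim : ∀ ε ∈ Set.Ioo (0:ℝ) b,
      (b - ε) ^ (γ-1) - ε ^ (γ-1) / γ ≤ (γ - 1) * (z j - z i) := by
    intro ε hε
    obtain ⟨hε0, hεb⟩ := hε
    set q : Fin d → ℝ := Function.update (Function.update p i ε) j (b - ε) with hq
    have hqi : q i = ε := by
      rw [hq, Function.update_of_ne hij, Function.update_self]
    have hqj : q j = b - ε := by rw [hq, Function.update_self]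
    have hqk : ∀ k, k ≠ i → k ≠ j → q k = p k := by
      intro k hki hkj
      rw [hq, Function.update_of_ne hkj, Function.update_of_ne hki]
    have hqmem : q ∈ probSimplex d := by
      constructor
      · intro k
        by_cases hki : k = i
        · subst hki; rw [hqi]; linarith
        · by_cases hkj : k = j
          · subst hkj; rw [hqj]; linarith
          · rw [hqk k hki hkj]; exact hps.1 k
      · have h := sum_sub_two (fun _ x => x) q p i j hij hqk
        simp only [hqi, hqj, hpi] at h
        rw [h, hps.2]; ring
    have hineq := hmax q hqmem
    have hlin := sum_sub_two (fun k x => x * z k) q p i j hij hqk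
    have hent := sum_sub_two (fun k x => x - x ^ γ) q p i j hij hqk
    simp only [hqi, hqj, hpi] at hlin hent
    simp only [tsallisEntropy] at hineq
    rw [hlin, hent, Real.zero_rpow hγ0.ne'] at hineq
    set c : ℝ := 1 / (γ * (γ - 1)) with hc
    have hc0 : 0 < c := by rw [hc]; positivity
    have key : ε * (z i - z j) + c * (b ^ γ - (b - ε) ^ γ - ε ^ γ) ≤ 0 := by
      linarith [hineq]
    have tang := rpow_tangent hγ.le (le_of_lt hpj) (show (0:ℝ) < b - ε by linarith)
    have tang' : (b - ε) ^ γ + γ * (b - ε) ^ (γ - 1) * ε ≤ b ^ γ := by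
      have e : b - (b - ε) = ε := by ring
      rw [e] at tang; exact tang
    have hεγ : ε ^ γ = ε ^ (γ - 1) * ε := by
      rw [← Real.rpow_add_one hε0.ne', sub_add_cancel]
    have h5 : (ε / (γ - 1)) * ((b - ε) ^ (γ-1) - ε ^ (γ-1) / γ) ≤ ε * (z j - z i) := by
      have e : (ε / (γ - 1)) * ((b - ε) ^ (γ-1) - ε ^ (γ-1) / γ)
          = c * (γ * (b - ε) ^ (γ-1) * ε - ε ^ (γ-1) * ε) := by
        rw [hc]; field_simp
      rw [e, ← hεγ]
      have h6 : γ * (b - ε) ^ (γ-1) * ε - ε ^ γ ≤ b ^ γ - (b - ε) ^ γ - ε ^ γ := by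
        linarith
      nlinarith [mul_le_mul_of_nonneg_left h6 hc0.le]
    have h7 : (ε / (γ - 1)) * ((b - ε) ^ (γ-1) - ε ^ (γ-1) / γ)
        ≤ (ε / (γ - 1)) * ((γ - 1) * (z j - z i)) := by
      have e2 : (ε / (γ - 1)) * ((γ - 1) * (z j - z i)) = ε * (z j - z i) := by
        field_simp
      rw [e2]; exact h5
    exact le_of_mul_le_mul_left h7 (div_pos hε0 hγ1)
  have t1 : Filter.Tendsto (fun ε : ℝ => (b - ε) ^ (γ-1)) (nhds 0) (nhds (b ^ (γ-1))) := by
    have hc1 : ContinuousAt (fun x : ℝ => x ^ (γ-1)) b :=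
      Real.continuousAt_rpow_const b (γ-1) (Or.inl hpj.ne')
    have hsub : Filter.Tendsto (fun ε : ℝ => b - ε) (nhds 0) (nhds b) := by
      have := (tendsto_const_nhds (x := b) (f := nhds (0:ℝ))).sub tendsto_id
      simpa using this
    exact hc1.tendsto.comp hsub
  have t2 : Filter.Tendsto (fun ε : ℝ => ε ^ (γ-1) / γ) (nhds 0) (nhds 0) := by
    have hc2 : ContinuousAt (fun x : ℝ => x ^ (γ-1)) 0 :=
      Real.continuousAt_rpow_const 0 (γ-1) (Or.inr (by linarith))
    have h := hc2.tendsto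
    rw [Real.zero_rpow hne1] at h
    have := h.div_const γ
    simpa using this
  have t : Filter.Tendsto (fun ε : ℝ => (b - ε) ^ (γ-1) - ε ^ (γ-1)/γ)
      (nhdsWithin 0 (Set.Ioi 0)) (nhds (b ^ (γ-1))) := by
    have := t1.sub t2
    rw [sub_zero] at this
    exact this.mono_left nhdsWithin_le_nhds
  refine le_of_tendsto t ?_
  filter_upwards [Ioo_mem_nhdsGT_of_mem (by simp [hpj] : (0:ℝ) ∈ Set.Ico 0 b)] with ε hε
  exact claim ε hε

lemma gradB {d : ℕ} {γ : ℝ} (hγ : 1 < γ) {z p : Fin d → ℝ}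
    (hps : p ∈ probSimplex d)
    (hmax : ∀ q ∈ probSimplex d,
      ∑ k, q k * z k + tsallisEntropy d γ q ≤ ∑ k, p k * z k + tsallisEntropy d γ p)
    {i j : Fin d} (hij : i ≠ j) (hpi : 0 < p i) :
    (γ - 1) * (z j - z i) ≤ p j ^ (γ - 1) - p i ^ (γ - 1) := by
  set a := p i with ha
  set b := p j with hb
  have hb0 : 0 ≤ b := hps.1 j
  have hγ0 : (0:ℝ) < γ := by linarith
  have hγ1 : (0:ℝ) < γ - 1 := by linarith
  have hne1 : γ - 1 ≠ 0 := hγ1.ne'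
  have claim : ∀ ε ∈ Set.Ioo (0:ℝ) a,
      (γ - 1) * (z j - z i) ≤ (b + ε) ^ (γ-1) - (a - ε) ^ (γ-1) := by
    intro ε hε
    obtain ⟨hε0, hεa⟩ := hε
    set q : Fin d → ℝ := Function.update (Function.update p i (a - ε)) j (b + ε) with hq
    have hqi : q i = a - ε := by
      rw [hq, Function.update_of_ne hij, Function.update_self]
    have hqj : q j = b + ε := by rw [hq, Function.update_self]
    have hqk : ∀ k, k ≠ i → k ≠ j → q k = p k := by
      intro k hki hkj
      rw [hq, Function.update_of_ne hkj, Function.update_of_ne hki]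
    have hqmem : q ∈ probSimplex d := by
      constructor
      · intro k
        by_cases hki : k = i
        · subst hki; rw [hqi]; linarith
        · by_cases hkj : k = j
          · subst hkj; rw [hqj]; linarith
          · rw [hqk k hki hkj]; exact hps.1 k
      · have h := sum_sub_two (fun _ x => x) q p i j hij hqk
        simp only [hqi, hqj] at h
        rw [h, hps.2]; ring
    have hineq := hmax q hqmem
    have hlin := sum_sub_two (fun k x => x * z k) q p i j hij hqk
    have hent := sum_sub_two (fun k x => x - x ^ γ) q p i j hij hqk
    simp only [hqi, hqj] at hlin hent
    simp only [tsallisEntropy] at hineq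
    rw [hlin, hent] at hineq
    set c : ℝ := 1 / (γ * (γ - 1)) with hc
    have hc0 : 0 < c := by rw [hc]; positivity
    have key : ε * (z j - z i)
        + c * (a ^ γ - (a - ε) ^ γ + b ^ γ - (b + ε) ^ γ) ≤ 0 := by
      linarith [hineq]
    have tA := rpow_tangent hγ.le (le_of_lt hpi) (show (0:ℝ) < a - ε by linarith)
    have tA' : (a - ε) ^ γ + γ * (a - ε) ^ (γ - 1) * ε ≤ a ^ γ := by
      have e : a - (a - ε) = ε := by ring
      rw [e] at tA; exact tA
    have tB := rpow_tangent hγ.le hb0 (show (0:ℝ) < b + ε by linarith)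
    have tB' : (b + ε) ^ γ - γ * (b + ε) ^ (γ - 1) * ε ≤ b ^ γ := by
      have e : b - (b + ε) = -ε := by ring
      rw [e] at tB; linarith [tB]
    have h5 : ε * (z j - z i)
        ≤ (ε / (γ - 1)) * ((b + ε) ^ (γ-1) - (a - ε) ^ (γ-1)) := by
      have e : (ε / (γ - 1)) * ((b + ε) ^ (γ-1) - (a - ε) ^ (γ-1))
          = c * (γ * (b + ε) ^ (γ-1) * ε - γ * (a - ε) ^ (γ-1) * ε) := by
        rw [hc]; field_simp
      rw [e]
      have h6 : -(a ^ γ - (a - ε) ^ γ + b ^ γ - (b + ε) ^ γ)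
          ≤ γ * (b + ε) ^ (γ-1) * ε - γ * (a - ε) ^ (γ-1) * ε := by
        linarith
      nlinarith [mul_le_mul_of_nonneg_left h6 hc0.le]
    have h7 : (ε / (γ - 1)) * ((γ - 1) * (z j - z i))
        ≤ (ε / (γ - 1)) * ((b + ε) ^ (γ-1) - (a - ε) ^ (γ-1)) := by
      have e2 : (ε / (γ - 1)) * ((γ - 1) * (z j - z i)) = ε * (z j - z i) := by
        field_simp
      rw [e2]; exact h5
    exact le_of_mul_le_mul_left h7 (div_pos hε0 hγ1)
  have t1 : Filter.Tendsto (fun ε : ℝ => (b + ε) ^ (γ-1)) (nhds 0) (nhds (b ^ (γ-1))) := by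
    have hc1 : ContinuousAt (fun x : ℝ => x ^ (γ-1)) b :=
      Real.continuousAt_rpow_const b (γ-1) (Or.inr (by linarith))
    have hadd : Filter.Tendsto (fun ε : ℝ => b + ε) (nhds 0) (nhds b) := by
      have := (tendsto_const_nhds (x := b) (f := nhds (0:ℝ))).add tendsto_id
      simpa using this
    exact hc1.tendsto.comp hadd
  have t2 : Filter.Tendsto (fun ε : ℝ => (a - ε) ^ (γ-1)) (nhds 0) (nhds (a ^ (γ-1))) := by
    have hc2 : ContinuousAt (fun x : ℝ => x ^ (γ-1)) a :=
      Real.continuousAt_rpow_const a (γ-1) (Or.inl hpi.ne')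
    have hsub : Filter.Tendsto (fun ε : ℝ => a - ε) (nhds 0) (nhds a) := by
      have := (tendsto_const_nhds (x := a) (f := nhds (0:ℝ))).sub tendsto_id
      simpa using this
    exact hc2.tendsto.comp hsub
  have t : Filter.Tendsto (fun ε : ℝ => (b + ε) ^ (γ-1) - (a - ε) ^ (γ-1))
      (nhdsWithin 0 (Set.Ioi 0)) (nhds (b ^ (γ-1) - a ^ (γ-1))) :=
    (t1.sub t2).mono_left nhdsWithin_le_nhds
  refine ge_of_tendsto t ?_
  filter_upwards [Ioo_mem_nhdsGT_of_mem (by simp [hpi] : (0:ℝ) ∈ Set.Ico 0 a)] with ε hε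
  exact claim ε hε

/-- Let `z ∈ ℝ^d` and `1 < α ≤ α'`.  If the `i`-th coordinate of `entmax_α(z)`
(the maximizer of `p·z + H_α(p)` over the simplex) is zero, then the `i`-th
coordinate of `entmax_{α'}(z)` is also zero: increasing `α` keeps sparse
coordinates sparse. -/
theorem entmax_sparsity_monotone (d : ℕ) (α α' : ℝ) (hα : 1 < α) (hαα' : α ≤ α')
    (z : Fin d → ℝ) (p p' : Fin d → ℝ)
    (hp : p ∈ probSimplex d ∧
      ∀ q ∈ probSimplex d,
        ∑ i, q i * z i + tsallisEntropy d α q ≤ ∑ i, p i * z i + tsallisEntropy d α p)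
    (hp' : p' ∈ probSimplex d ∧
      ∀ q ∈ probSimplex d,
        ∑ i, q i * z i + tsallisEntropy d α' q ≤ ∑ i, p' i * z i + tsallisEntropy d α' p')
    (i : Fin d) (hi : p i = 0) :
    p' i = 0 := by
  obtain ⟨hps, hpmax⟩ := hp
  obtain ⟨hps', hpmax'⟩ := hp'
  by_contra hne
  have hpi' : 0 < p' i := lt_of_le_of_ne (hps'.1 i) (Ne.symm hne)
  have hexists : ∃ j, p' j < p j := by
    by_contra hall
    push_neg at hall
    have hlt : ∑ k, p k < ∑ k, p' k :=
      Finset.sum_lt_sum (fun k _ => hall k)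
        ⟨i, Finset.mem_univ i, by rw [hi]; exact hpi'⟩
    rw [hps.2, hps'.2] at hlt; exact lt_irrefl 1 hlt
  obtain ⟨j, hj⟩ := hexists
  have hpj : 0 < p j := lt_of_le_of_lt (hps'.1 j) hj
  have hij : i ≠ j := by
    rintro rfl
    rw [hi] at hj
    exact absurd hj (not_lt.mpr (hps'.1 i))
  have hA := gradA hα hps hpmax hij hi hpj
  have hβ : 1 < α' := lt_of_lt_of_le hα hαα'
  have hB := gradB hβ hps' hpmax' hij hpi'
  have hrp : 0 < p j ^ (α - 1) := Real.rpow_pos_of_pos hpj _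
  have hzpos : 0 < z j - z i := by nlinarith
  have h1 : (α - 1) * (z j - z i) ≤ (α' - 1) * (z j - z i) := by nlinarith
  have hpj1 : p j ≤ 1 := by
    have h := Finset.single_le_sum (f := p) (fun k _ => hps.1 k) (Finset.mem_univ j)
    rw [hps.2] at h; exact h
  have h2 : p j ^ (α' - 1) ≤ p j ^ (α - 1) :=
    Real.rpow_le_rpow_of_exponent_ge hpj hpj1 (by linarith)
  have h3 : 0 < p' i ^ (α' - 1) := Real.rpow_pos_of_pos hpi' _
  have h5 : p' j ^ (α' - 1) ≤ p j ^ (α' - 1) :=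
    Real.rpow_le_rpow (hps'.1 j) hj.le (by linarith)
  linarith
end

section
/- Let z ∈ ℝ^d, let I ⊆ (1, ∞) be an open interval, and let τ : I → ℝ be a differentiable function such that for all α ∈ I the vector p(α) with coordinates p_i(α) = [(α−1)(z_i − τ(α))]_+^{1/(α−1)} satisfies Σ_i p_i(α) = 1, and such that the support set {i : p_i(α) > 0} is constant on I with z_i − τ(α) > 0 for every i in the support. Then for all α ∈ I, τ'(α) = (1/(α−1)² + H_S(p(α))/(α−1)) / Σ_i p_i(α)^{2−α}, where H_S(p) = −Σ_j p_j log p_j (with 0 log 0 = 0) and the sum Σ_i p_i(α)^{2−α} ranges over the support. -/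
open Real

/-- Let `z ∈ ℝ^d`, let `I = (a,b) ⊆ (1,∞)` be an open interval, and let
`τ : I → ℝ` be differentiable, such that for all `α ∈ I` the vector `p(α)` with
`p_i(α) = [(α−1)(z_i − τ(α))]_+^{1/(α−1)}` sums to one, the support
`{i : p_i(α) > 0}` equals a fixed set `S` on `I`, and `z_i − τ(α) > 0` for every
`i ∈ S`.  Then for all `α ∈ I`,
`τ'(α) = (1/(α−1)² + H_S(p(α))/(α−1)) / Σ_{i ∈ S} p_i(α)^{2−α}`,
where `H_S(p) = −Σ_j p_j log p_j` (with `0 log 0 = 0`). -/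
theorem entmax_threshold_deriv (d : ℕ) (z : Fin d → ℝ) (a b : ℝ) (ha : 1 ≤ a)
    (τ : ℝ → ℝ) (hτ : ∀ α ∈ Set.Ioo a b, DifferentiableAt ℝ τ α)
    (p : ℝ → Fin d → ℝ)
    (hp : ∀ α i, p α i = max ((α - 1) * (z i - τ α)) 0 ^ (1 / (α - 1)))
    (hsum : ∀ α ∈ Set.Ioo a b, ∑ i, p α i = 1)
    (S : Finset (Fin d))
    (hsupp : ∀ α ∈ Set.Ioo a b, ∀ i, i ∈ S ↔ 0 < p α i)
    (hpos : ∀ α ∈ Set.Ioo a b, ∀ i ∈ S, 0 < z i - τ α) :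
    ∀ α ∈ Set.Ioo a b,
      deriv τ α =
        (1 / (α - 1) ^ 2 + (∑ j, Real.negMulLog (p α j)) / (α - 1)) /
          ∑ i ∈ S, p α i ^ (2 - α) := by
  intro α hα
  obtain ⟨hαa, hαb⟩ := hα
  have h1α : 1 < α := lt_of_le_of_lt ha hαa
  have hs : (0:ℝ) < α - 1 := by linarith
  have hsne : α - 1 ≠ 0 := ne_of_gt hs
  -- nonnegativity of p
  have hpnn : ∀ β (i : Fin d), 0 ≤ p β i := by
    intro β i
    rw [hp]
    exact Real.rpow_nonneg (le_max_right _ _) _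
  -- zero off support
  have hzero : ∀ β ∈ Set.Ioo a b, ∀ i ∉ S, p β i = 0 := by
    intro β hβ i hi
    by_contra h
    exact hi ((hsupp β hβ i).mpr (lt_of_le_of_ne (hpnn β i) (Ne.symm h)))
  -- positivity of inner argument on support
  have hu : ∀ β ∈ Set.Ioo a b, ∀ i ∈ S, 0 < (β - 1) * (z i - τ β) := by
    intro β hβ i hi
    have : 1 < β := lt_of_le_of_lt ha hβ.1
    exact mul_pos (by linarith) (hpos β hβ i hi)
  -- exponential formula on the support
  have hpeq : ∀ β ∈ Set.Ioo a b, ∀ i ∈ S,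
      p β i = Real.exp (Real.log ((β - 1) * (z i - τ β)) / (β - 1)) := by
    intro β hβ i hi
    rw [hp, max_eq_left (hu β hβ i hi).le, Real.rpow_def_of_pos (hu β hβ i hi),
      mul_one_div]
  set F : ℝ → ℝ :=
    fun β => ∑ i ∈ S, Real.exp (Real.log ((β - 1) * (z i - τ β)) / (β - 1)) with hF
  have hF1 : ∀ β ∈ Set.Ioo a b, F β = 1 := by
    intro β hβ
    have h1 : F β = ∑ i ∈ S, p β i :=
      Finset.sum_congr rfl fun i hi => (hpeq β hβ i hi).symm
    rw [h1, Finset.sum_subset (Finset.subset_univ S)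
      (fun i _ hi => hzero β hβ i hi), hsum β hβ]
  have hτd : HasDerivAt τ (deriv τ α) α := (hτ α ⟨hαa, hαb⟩).hasDerivAt
  set t' := deriv τ α with ht'
  -- derivative of each term
  have hderiv : ∀ i ∈ S, HasDerivAt
      (fun β => Real.exp (Real.log ((β - 1) * (z i - τ β)) / (β - 1)))
      (Real.exp (Real.log ((α - 1) * (z i - τ α)) / (α - 1)) *
        (((1 * (z i - τ α) + (α - 1) * (0 - t')) / ((α - 1) * (z i - τ α)) * (α - 1)
          - Real.log ((α - 1) * (z i - τ α)) * 1) / (α - 1) ^ 2)) α := by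
    intro i hi
    have hui := hu α ⟨hαa, hαb⟩ i hi
    have h1 : HasDerivAt (fun β => (β - 1) * (z i - τ β))
        (1 * (z i - τ α) + (α - 1) * (0 - t')) α :=
      ((hasDerivAt_id α).sub_const 1).mul ((hasDerivAt_const α (z i)).sub hτd)
    have h2 := (h1.log (ne_of_gt hui)).div ((hasDerivAt_id α).sub_const 1) hsne
    exact h2.exp
  have hFD : HasDerivAt F
      (∑ i ∈ S, Real.exp (Real.log ((α - 1) * (z i - τ α)) / (α - 1)) *
        (((1 * (z i - τ α) + (α - 1) * (0 - t')) / ((α - 1) * (z i - τ α)) * (α - 1)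
          - Real.log ((α - 1) * (z i - τ α)) * 1) / (α - 1) ^ 2)) α :=
    HasDerivAt.fun_sum hderiv
  -- F is locally constant, so its derivative is 0
  have hFev : F =ᶠ[nhds α] fun _ => (1:ℝ) := by
    filter_upwards [isOpen_Ioo.mem_nhds (Set.mem_Ioo.mpr ⟨hαa, hαb⟩)] with β hβ
    exact hF1 β hβ
  have hF0 : HasDerivAt F 0 α :=
    (hasDerivAt_const α (1:ℝ)).congr_of_eventuallyEq hFev
  have hD0 := hFD.unique hF0
  -- rewrite each term of the derivative sum
  have hterm : ∀ i ∈ S,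
      Real.exp (Real.log ((α - 1) * (z i - τ α)) / (α - 1)) *
        (((1 * (z i - τ α) + (α - 1) * (0 - t')) / ((α - 1) * (z i - τ α)) * (α - 1)
          - Real.log ((α - 1) * (z i - τ α)) * 1) / (α - 1) ^ 2)
      = p α i / (α - 1) ^ 2 - t' * p α i ^ (2 - α) - p α i * Real.log (p α i) / (α - 1) := by
    intro i hi
    have hui := hu α ⟨hαa, hαb⟩ i hi
    have hc := hpos α ⟨hαa, hαb⟩ i hi
    have hpe := hpeq α ⟨hαa, hαb⟩ i hi
    have hpi : 0 < p α i := (hsupp α ⟨hαa, hαb⟩ i).mp hi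
    have hps : p α i ^ (α - 1) = (α - 1) * (z i - τ α) := by
      rw [hp, max_eq_left hui.le, ← Real.rpow_mul hui.le, one_div_mul_cancel hsne,
        Real.rpow_one]
    have hlog : Real.log ((α - 1) * (z i - τ α)) = (α - 1) * Real.log (p α i) := by
      rw [← hps, Real.log_rpow hpi]
    have h2a : p α i ^ (2 - α) = p α i / ((α - 1) * (z i - τ α)) := by
      rw [← hps, show (2 - α) = 1 - (α - 1) by ring, Real.rpow_sub hpi, Real.rpow_one]
    rw [← hpe, hlog, h2a]
    field_simp
    ring
  have key : ∑ i ∈ S, (p α i / (α - 1) ^ 2 - t' * p α i ^ (2 - α)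
      - p α i * Real.log (p α i) / (α - 1)) = 0 := by
    rw [← Finset.sum_congr rfl hterm]
    exact hD0
  have hsumS : ∑ i ∈ S, p α i = 1 := by
    rw [Finset.sum_subset (Finset.subset_univ S)
      (fun i _ hi => hzero α ⟨hαa, hαb⟩ i hi), hsum α ⟨hαa, hαb⟩]
  have hH : ∑ j, Real.negMulLog (p α j) = -∑ i ∈ S, p α i * Real.log (p α i) := by
    rw [← Finset.sum_subset (Finset.subset_univ S)
      (fun i _ hi => by rw [hzero α ⟨hαa, hαb⟩ i hi, Real.negMulLog_zero])]
    simp [Real.negMulLog, Finset.sum_neg_distrib]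
  have hSne : S.Nonempty := by
    by_contra h
    rw [Finset.not_nonempty_iff_eq_empty] at h
    rw [h, Finset.sum_empty] at hsumS
    exact one_ne_zero hsumS.symm
  have hQ : 0 < ∑ i ∈ S, p α i ^ (2 - α) :=
    Finset.sum_pos (fun i hi =>
      Real.rpow_pos_of_pos ((hsupp α ⟨hαa, hαb⟩ i).mp hi) _) hSne
  have key2 : (∑ i ∈ S, p α i) / (α - 1) ^ 2 - t' * (∑ i ∈ S, p α i ^ (2 - α))
      - (∑ i ∈ S, p α i * Real.log (p α i)) / (α - 1) = 0 := by
    rw [← key, Finset.sum_sub_distrib, Finset.sum_sub_distrib, Finset.sum_div,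
      Finset.sum_div, Finset.mul_sum]
  rw [hH, hsumS] at *
  rw [eq_div_iff (ne_of_gt hQ)]
  rw [hsumS] at key2
  set L := ∑ i ∈ S, p α i * Real.log (p α i)
  set Q := ∑ i ∈ S, p α i ^ (2 - α)
  linear_combination -key2
end

section
/- (Proposition 1, case α > 1.) Let z ∈ ℝ^d, let I ⊆ (1, ∞) be an open interval, and let τ : I → ℝ be a differentiable function such that for all α ∈ I the vector p(α) with coordinates p_i(α) = [(α−1)(z_i − τ(α))]_+^{1/(α−1)} satisfies Σ_i p_i(α) = 1, and such that the support set {i : p_i(α) > 0} is constant on I with z_i − τ(α) > 0 for every i in the support. Then for each i in the support and all α ∈ I, d p_i(α)/dα = (p_i(α) − p̃_i(α))/(α−1)² − (p_i(α) log p_i(α) + p̃_i(α) H_S(p(α)))/(α−1), where p̃_i(α) = p_i(α)^{2−α} / Σ_j p_j(α)^{2−α} (sums over the support) and H_S(p) = −Σ_j p_j log p_j with 0 log 0 = 0. For each i outside the support, d p_i(α)/dα = 0. -/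
/-- (Proposition 1, case `α > 1`.)  Let `z ∈ ℝ^d`, let `I = (a,b) ⊆ (1,∞)` be an
open interval, and let `τ : I → ℝ` be differentiable, such that for all `α ∈ I`
the vector `p(α)` with `p_i(α) = [(α−1)(z_i − τ(α))]_+^{1/(α−1)}` sums to one,
the support `{i : p_i(α) > 0}` equals a fixed set `S` on `I`, and
`z_i − τ(α) > 0` for every `i ∈ S`.  Then for each `i ∈ S` and `α ∈ I`,
`d p_i(α)/dα = (p_i − p̃_i)/(α−1)² − (p_i log p_i + p̃_i H_S(p(α)))/(α−1)`,
where `p̃_i(α) = p_i(α)^{2−α} / Σ_{j ∈ S} p_j(α)^{2−α}` and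
`H_S(p) = −Σ_j p_j log p_j` (with `0 log 0 = 0`); and for each `i ∉ S`,
`d p_i(α)/dα = 0`. -/
theorem entmax_jacobian_wrt_alpha (d : ℕ) (z : Fin d → ℝ) (a b : ℝ) (ha : 1 ≤ a)
    (τ : ℝ → ℝ) (hτ : ∀ α ∈ Set.Ioo a b, DifferentiableAt ℝ τ α)
    (p : ℝ → Fin d → ℝ)
    (hp : ∀ α i, p α i = max ((α - 1) * (z i - τ α)) 0 ^ (1 / (α - 1)))
    (hsum : ∀ α ∈ Set.Ioo a b, ∑ i, p α i = 1)
    (S : Finset (Fin d))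
    (hsupp : ∀ α ∈ Set.Ioo a b, ∀ i, i ∈ S ↔ 0 < p α i)
    (hpos : ∀ α ∈ Set.Ioo a b, ∀ i ∈ S, 0 < z i - τ α) :
    ∀ α ∈ Set.Ioo a b,
      (∀ i ∈ S,
        HasDerivAt (fun β : ℝ => p β i)
          ((p α i - p α i ^ (2 - α) / ∑ j ∈ S, p α j ^ (2 - α)) / (α - 1) ^ 2 -
            (p α i * Real.log (p α i) +
              (p α i ^ (2 - α) / ∑ j ∈ S, p α j ^ (2 - α)) *
                (∑ j, Real.negMulLog (p α j))) / (α - 1)) α) ∧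
      ∀ i ∉ S, HasDerivAt (fun β : ℝ => p β i) 0 α := by
  intro α hα
  obtain ⟨haα, hαb⟩ := hα
  have hmem : α ∈ Set.Ioo a b := ⟨haα, hαb⟩
  have hα1 : (1:ℝ) < α := lt_of_le_of_lt ha haα
  have hu0 : (0:ℝ) < α - 1 := by linarith
  have hune : (α - 1) ≠ 0 := ne_of_gt hu0
  have hpnn : ∀ β i, 0 ≤ p β i := by
    intro β i; rw [hp]; exact Real.rpow_nonneg (le_max_right _ _) _
  have hout0 : ∀ β ∈ Set.Ioo a b, ∀ i ∉ S, p β i = 0 := by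
    intro β hβ i hi
    by_contra h
    exact hi ((hsupp β hβ i).2 (lt_of_le_of_ne (hpnn β i) (Ne.symm h)))
  have hzero : ∀ i ∉ S, HasDerivAt (fun β => p β i) 0 α := by
    intro i hi
    have heq : (fun β => p β i) =ᶠ[nhds α] fun _ => (0:ℝ) := by
      filter_upwards [Ioo_mem_nhds haα hαb] with β hβ
      exact hout0 β hβ i hi
    exact (hasDerivAt_const α (0:ℝ)).congr_of_eventuallyEq heq
  set t' := deriv τ α with ht'def
  have hτα : HasDerivAt τ t' α := (hτ α hmem).hasDerivAt
  -- main per-index derivative, with a provisional value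
  have key : ∀ i ∈ S, HasDerivAt (fun β => p β i)
      (p α i / (α - 1) ^ 2 - t' * p α i ^ (2 - α)
        - p α i * Real.log (p α i) / (α - 1)) α := by
    intro i hiS
    have hzi : 0 < z i - τ α := hpos α hmem i hiS
    have hG : 0 < (α - 1) * (z i - τ α) := mul_pos hu0 hzi
    have hP : 0 < p α i := (hsupp α hmem i).1 hiS
    have hg : HasDerivAt (fun β => (β - 1) * (z i - τ β))
        (1 * (z i - τ α) + (α - 1) * (0 - t')) α :=
      (((hasDerivAt_id α).sub_const 1).mul ((hasDerivAt_const α (z i)).sub hτα))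
    have hh : HasDerivAt (fun β : ℝ => (β - 1)⁻¹) (-1 / (α - 1) ^ 2) α :=
      ((hasDerivAt_id α).sub_const 1).inv hune
    have hF := hg.rpow hh hG
    have heq : (fun β => p β i) =ᶠ[nhds α]
        (fun β => ((β - 1) * (z i - τ β)) ^ (β - 1)⁻¹) := by
      have hcont : ContinuousAt τ α := hτα.continuousAt
      filter_upwards [hcont.preimage_mem_nhds (Iio_mem_nhds (by linarith : τ α < z i)),
        Ioi_mem_nhds hα1] with β hβ1 hβ2
      have h1 : τ β < z i := hβ1
      have h2 : (1:ℝ) < β := hβ2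
      have hb : (0:ℝ) ≤ (β - 1) * (z i - τ β) :=
        le_of_lt (mul_pos (by linarith) (by linarith))
      rw [hp, max_eq_left hb, one_div]
    have hF' := hF.congr_of_eventuallyEq heq
    have hE1 : ((α - 1) * (z i - τ α)) ^ (α - 1)⁻¹ = p α i := by
      rw [hp, max_eq_left hG.le, one_div]
    have hGP : (α - 1) * (z i - τ α) = p α i ^ (α - 1) := by
      rw [← hE1, ← Real.rpow_mul hG.le, inv_mul_cancel₀ hune, Real.rpow_one]
    have hE2 : ((α - 1) * (z i - τ α)) ^ ((α - 1)⁻¹ - 1)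
        = p α i / ((α - 1) * (z i - τ α)) := by
      rw [Real.rpow_sub hG, Real.rpow_one, hE1]
    have hE3 : Real.log ((α - 1) * (z i - τ α)) = (α - 1) * Real.log (p α i) := by
      rw [hGP, Real.log_rpow hP]
    have hE4 : p α i ^ (2 - α) = p α i / ((α - 1) * (z i - τ α)) := by
      have h2 : (2:ℝ) - α = 1 - (α - 1) := by ring
      rw [h2, Real.rpow_sub hP, Real.rpow_one, hGP]
    refine HasDerivAt.congr_deriv hF' ?_
    rw [hE1, hE2, hE3, hE4]
    have hGne : (α - 1) * (z i - τ α) ≠ 0 := ne_of_gt hG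
    field_simp
    ring
  -- sum of derivatives
  have hsum_deriv : HasDerivAt (fun β => ∑ i, p β i)
      (∑ i ∈ S, (p α i / (α - 1) ^ 2 - t' * p α i ^ (2 - α)
        - p α i * Real.log (p α i) / (α - 1))) α := by
    have h1 : HasDerivAt (fun β => ∑ i, p β i)
        (∑ i : Fin d, (if i ∈ S then (p α i / (α - 1) ^ 2 - t' * p α i ^ (2 - α)
          - p α i * Real.log (p α i) / (α - 1)) else 0)) α := by
      apply HasDerivAt.fun_sum
      intro i _
      by_cases hi : i ∈ S
      · simpa [hi] using key i hi
      · simpa [hi] using hzero i hi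
    simpa [Finset.sum_ite_mem, Finset.univ_inter] using h1
  have hconst : HasDerivAt (fun β => ∑ i, p β i) 0 α := by
    have heq : (fun β => ∑ i, p β i) =ᶠ[nhds α] fun _ => (1:ℝ) := by
      filter_upwards [Ioo_mem_nhds haα hαb] with β hβ using hsum β hβ
    exact (hasDerivAt_const α (1:ℝ)).congr_of_eventuallyEq heq
  have hkey0 : (∑ i ∈ S, (p α i / (α - 1) ^ 2 - t' * p α i ^ (2 - α)
      - p α i * Real.log (p α i) / (α - 1))) = 0 := hsum_deriv.unique hconst
  have hsumS : ∑ i ∈ S, p α i = 1 := by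
    rw [← hsum α hmem]
    exact Finset.sum_subset (Finset.subset_univ S)
      (fun i _ hi => hout0 α hmem i hi) |>.symm ▸ rfl
  set T := ∑ j ∈ S, p α j ^ (2 - α) with hTdef
  set L := ∑ j ∈ S, p α j * Real.log (p α j) with hLdef
  have hH : (∑ j, Real.negMulLog (p α j)) = -L := by
    rw [← Finset.sum_subset (Finset.subset_univ S)
      (fun i _ hi => by rw [hout0 α hmem i hi, Real.negMulLog_zero])]
    simp [Real.negMulLog, hLdef, neg_mul, Finset.sum_neg_distrib]
  have hSne : S.Nonempty := by
    by_contra h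
    rw [Finset.not_nonempty_iff_eq_empty] at h
    rw [h] at hsumS
    simp at hsumS
  have hT : 0 < T :=
    Finset.sum_pos (fun j hj => Real.rpow_pos_of_pos ((hsupp α hmem j).1 hj) _) hSne
  have hexp : (∑ i ∈ S, (p α i / (α - 1) ^ 2 - t' * p α i ^ (2 - α)
      - p α i * Real.log (p α i) / (α - 1)))
      = 1 / (α - 1) ^ 2 - t' * T - L / (α - 1) := by
    rw [Finset.sum_sub_distrib, Finset.sum_sub_distrib, ← Finset.sum_div, hsumS,
      ← Finset.mul_sum, ← Finset.sum_div]
  have heq0 : 1 / (α - 1) ^ 2 - t' * T - L / (α - 1) = 0 := by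
    rw [← hexp]; exact hkey0
  have ht'eq : t' = (1 / (α - 1) ^ 2 - L / (α - 1)) / T := by
    rw [eq_div_iff (ne_of_gt hT)]; linarith [heq0]
  constructor
  · intro i hiS
    have hD := key i hiS
    convert hD using 1
    rw [hH, ht'eq]
    field_simp
    ring
  · exact hzero
end

section
/- (Proposition 1, case α = 1, via L'Hôpital.) Fix a probability vector p ∈ Δ^d with all coordinates strictly positive, and define p̃_i(α) = p_i^{2−α} / Σ_j p_j^{2−α} and H_S(p) = −Σ_j p_j log p_j. Then for each i, the limit as α → 1⁺ of (p_i − p̃_i(α))/(α−1)² − (p_i log p_i + p̃_i(α) H_S(p))/(α−1) exists and equals (−p_i log² p_i + p_i Σ_j p_j log² p_j)/2. -/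
open Real Filter

lemma hd_pow {c : ℝ} (hc : 0 < c) (α : ℝ) :
    HasDerivAt (fun α : ℝ => c ^ (2 - α)) (-(Real.log c * c ^ (2 - α))) α := by
  have h1 : HasDerivAt (fun α : ℝ => 2 - α) (-1) α := (hasDerivAt_id α).const_sub 2
  have h2 := (Real.hasStrictDerivAt_const_rpow hc (2 - α)).hasDerivAt
  have := h2.comp α h1
  exact this.congr_deriv (by ring)

lemma quad_limit {f f' : ℝ → ℝ} {c : ℝ}
    (hf : ∀ x, HasDerivAt f (f' x) x) (hf' : HasDerivAt f' c 1)
    (h0 : f 1 = 0) (h1 : f' 1 = 0) :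
    Tendsto (fun x => f x / (x - 1) ^ 2) (nhdsWithin 1 (Set.Ioi 1)) (nhds (c / 2)) := by
  apply HasDerivAt.lhopital_zero_nhdsGT
    (f' := f') (g' := fun x => 2 * (x - 1))
  · exact Filter.Eventually.of_forall hf
  · refine Filter.Eventually.of_forall fun x => ?_
    have : HasDerivAt (fun x : ℝ => (x - 1) ^ 2) ((2 : ℕ) * (x - 1) ^ 1 * 1) x :=
      ((hasDerivAt_id x).sub_const 1).pow 2
    convert this using 1
    push_cast; ring
  · filter_upwards [self_mem_nhdsWithin] with x hx
    have : (0 : ℝ) < x - 1 := by simpa using sub_pos.mpr (Set.mem_Ioi.mp hx)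
    positivity
  · have := ((hf 1).continuousAt.continuousWithinAt (s := Set.Ioi 1)).tendsto
    rwa [h0] at this
  · have : ContinuousWithinAt (fun x : ℝ => (x - 1) ^ 2) (Set.Ioi 1) 1 :=
      ((continuous_id.sub continuous_const).pow 2).continuousWithinAt
    have := this.tendsto
    simpa using this
  · have hs := hasDerivAt_iff_tendsto_slope.mp hf'
    have hs' : Tendsto (slope f' 1) (nhdsWithin 1 (Set.Ioi 1)) (nhds c) :=
      hs.mono_left (nhdsWithin_mono _ (fun x hx => ne_of_gt hx))
    have := hs'.div_const 2
    refine this.congr fun x => ?_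
    simp only [slope_def_field, div_div]
    rw [h1]
    ring_nf

/-- (Proposition 1, case `α = 1`, via L'Hôpital.)  Fix a probability vector `p`
with strictly positive coordinates and set `p̃_i(α) = p_i^{2−α} / Σ_j p_j^{2−α}`
and `H_S(p) = −Σ_j p_j log p_j`.  Then for each `i`, as `α → 1⁺`,
`(p_i − p̃_i(α))/(α−1)² − (p_i log p_i + p̃_i(α) H_S(p))/(α−1)` tends to
`(−p_i log² p_i + p_i Σ_j p_j log² p_j)/2`. -/
theorem entmax_jacobian_alpha_one_limit (d : ℕ) (p : Fin d → ℝ)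
    (hpos : ∀ j, 0 < p j) (hsum : ∑ j, p j = 1) (i : Fin d) :
    Filter.Tendsto
      (fun α : ℝ =>
        (p i - p i ^ (2 - α) / ∑ j, p j ^ (2 - α)) / (α - 1) ^ 2 -
          (p i * Real.log (p i) +
            (p i ^ (2 - α) / ∑ j, p j ^ (2 - α)) *
              (-∑ j, p j * Real.log (p j))) / (α - 1))
      (nhdsWithin 1 (Set.Ioi 1))
      (nhds ((-(p i * Real.log (p i) ^ 2) + p i * ∑ j, p j * Real.log (p j) ^ 2) / 2)) := by
  classical
  -- abbreviations (pure notation)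
  have h21 : (2 : ℝ) - 1 = 1 := by norm_num
  -- per-term functions
  set A : Fin d → ℝ → ℝ := fun j α =>
    p i * p j ^ (2 - α) - p i ^ (2 - α) * p j
      - (α - 1) * (p i * Real.log (p i) * p j ^ (2 - α))
      + (α - 1) * (p i ^ (2 - α) * (p j * Real.log (p j))) with hA_def
  set A' : Fin d → ℝ → ℝ := fun j α =>
    -(p i * Real.log (p j) * p j ^ (2 - α)) + Real.log (p i) * p i ^ (2 - α) * p j
      - p i * Real.log (p i) * p j ^ (2 - α)
      + (α - 1) * (p i * Real.log (p i) * Real.log (p j) * p j ^ (2 - α))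
      + p i ^ (2 - α) * (p j * Real.log (p j))
      - (α - 1) * (Real.log (p i) * p i ^ (2 - α) * (p j * Real.log (p j))) with hA'_def
  have hA : ∀ j α, HasDerivAt (A j) (A' j α) α := by
    intro j α
    have hu := hd_pow (hpos j) α
    have hv := hd_pow (hpos i) α
    have h :=
      (((hu.const_mul (p i)).sub (hv.mul_const (p j))).sub
        (((hasDerivAt_id α).sub_const 1).mul
          (hu.const_mul (p i * Real.log (p i))))).add
        (((hasDerivAt_id α).sub_const 1).mul
          (hv.mul_const (p j * Real.log (p j))))
    refine h.congr_deriv ?_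
    simp only [hA'_def, id_eq]
    ring
  have hA' : ∀ j, HasDerivAt (A' j)
      (p i * p j * (Real.log (p j) ^ 2 - Real.log (p i) ^ 2)) 1 := by
    intro j
    have hu := hd_pow (hpos j) 1
    have hv := hd_pow (hpos i) 1
    have h :=
      ((((((hu.const_mul (p i * Real.log (p j))).neg).add
          ((hv.const_mul (Real.log (p i))).mul_const (p j))).sub
        (hu.const_mul (p i * Real.log (p i)))).add
        (((hasDerivAt_id 1).sub_const 1).mul
          (hu.const_mul (p i * Real.log (p i) * Real.log (p j))))).add
        (hv.mul_const (p j * Real.log (p j)))).sub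
        (((hasDerivAt_id 1).sub_const 1).mul
          ((hv.const_mul (Real.log (p i))).mul_const (p j * Real.log (p j))))
    refine h.congr_deriv ?_
    simp only [h21, Real.rpow_one, id_eq]
    ring
  have key : ∀ j, Tendsto (fun α => A j α / (α - 1) ^ 2)
      (nhdsWithin 1 (Set.Ioi 1))
      (nhds (p i * p j * (Real.log (p j) ^ 2 - Real.log (p i) ^ 2) / 2)) := by
    intro j
    refine quad_limit (hA j) (hA' j) ?_ ?_
    · simp only [hA_def, h21, Real.rpow_one]; ring
    · simp only [hA'_def, h21, Real.rpow_one]; ring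
  -- denominator sum tends to 1
  have hScont : Continuous (fun α : ℝ => ∑ j, p j ^ (2 - α)) :=
    continuous_finset_sum _ fun j _ =>
      Continuous.rpow continuous_const (continuous_const.sub continuous_id)
        fun x => Or.inl (hpos j).ne'
  have hS1 : Tendsto (fun α : ℝ => ∑ j, p j ^ (2 - α))
      (nhdsWithin 1 (Set.Ioi 1)) (nhds 1) := by
    have := (hScont.continuousAt (x := 1)).continuousWithinAt (s := Set.Ioi 1) |>.tendsto
    simpa [h21, Real.rpow_one, hsum] using this
  have hSinv := hS1.inv₀ one_ne_zero
  have hmul := (tendsto_finset_sum Finset.univ (fun j _ => key j)).mul hSinv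
  have hconst : (∑ j, p i * p j * (Real.log (p j) ^ 2 - Real.log (p i) ^ 2) / 2) * 1⁻¹
      = (-(p i * Real.log (p i) ^ 2) + p i * ∑ j, p j * Real.log (p j) ^ 2) / 2 := by
    rw [inv_one, mul_one, ← Finset.sum_div]
    congr 1
    have hterm : ∀ j, p i * p j * (Real.log (p j) ^ 2 - Real.log (p i) ^ 2)
        = p i * (p j * Real.log (p j) ^ 2) - p i * Real.log (p i) ^ 2 * p j := by
      intro j; ring
    simp only [hterm, Finset.sum_sub_distrib, ← Finset.mul_sum, hsum, mul_one]
    ring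
  rw [hconst] at hmul
  refine Filter.Tendsto.congr' ?_ hmul
  filter_upwards [self_mem_nhdsWithin] with α hα
  have hα1 : (1 : ℝ) < α := hα
  have ht : α - 1 ≠ 0 := sub_ne_zero.mpr (ne_of_gt hα1)
  have hS0 : 0 < ∑ j, p j ^ (2 - α) :=
    Finset.sum_pos (fun j _ => Real.rpow_pos_of_pos (hpos j) _) ⟨i, Finset.mem_univ i⟩
  have hAsum : (∑ j, A j α)
      = p i * (∑ j, p j ^ (2 - α)) - p i ^ (2 - α)
        - (α - 1) * (p i * Real.log (p i)) * (∑ j, p j ^ (2 - α))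
        + (α - 1) * (p i ^ (2 - α)) * (∑ j, p j * Real.log (p j)) := by
    simp only [hA_def, Finset.sum_add_distrib, Finset.sum_sub_distrib, ← Finset.mul_sum]
    rw [hsum]
    ring
  rw [← Finset.sum_div, hAsum]
  field_simp
  ring
end

section
/- Let α > 1 and z ∈ ℝ^d. The function φ(τ) = Σ_i [(α−1)(z_i − τ)]_+^{1/(α−1)} is continuous and non-increasing on ℝ, is strictly decreasing on {τ : φ(τ) > 0}, tends to +∞ as τ → −∞, and equals 0 for τ ≥ max_i z_i; consequently there is exactly one τ* ∈ ℝ with φ(τ*) = 1. -/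
/-- Let `α > 1` and `z ∈ ℝ^d` (`d ≥ 1`).  The normalization function
`φ(τ) = Σ_i [(α−1)(z_i − τ)]_+^{1/(α−1)}` is continuous and non-increasing on
`ℝ`, strictly decreasing on `{τ : φ(τ) > 0}`, tends to `+∞` as `τ → −∞`, and
equals `0` whenever `τ ≥ max_i z_i`; consequently there is exactly one
`τ* ∈ ℝ` with `φ(τ*) = 1`. -/
theorem entmax_normalization_function (d : ℕ) (hd : 0 < d) (α : ℝ) (hα : 1 < α)
    (z : Fin d → ℝ) (φ : ℝ → ℝ)
    (hφ : ∀ τ, φ τ = ∑ i, max ((α - 1) * (z i - τ)) 0 ^ (1 / (α - 1))) :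
    Continuous φ ∧
    Antitone φ ∧
    StrictAntiOn φ {τ | 0 < φ τ} ∧
    Filter.Tendsto φ Filter.atBot Filter.atTop ∧
    (∀ τ, (∀ i, z i ≤ τ) → φ τ = 0) ∧
    (∃! τ, φ τ = 1) := by
  have hφ' : φ = fun τ => ∑ i, max ((α - 1) * (z i - τ)) 0 ^ (1 / (α - 1)) := funext hφ
  subst hφ'
  haveI : Nonempty (Fin d) := ⟨⟨0, hd⟩⟩
  set p : ℝ := 1 / (α - 1) with hpdef
  have hα1 : (0:ℝ) < α - 1 := by linarith
  have hp0 : 0 < p := by positivity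
  have hcont : Continuous (fun τ => ∑ i, max ((α - 1) * (z i - τ)) 0 ^ p) := by
    apply continuous_finset_sum
    intro i _
    apply Continuous.rpow_const
    · exact (continuous_const.mul (continuous_const.sub continuous_id)).max continuous_const
    · intro x; exact Or.inr hp0.le
  have hanti : Antitone (fun τ => ∑ i, max ((α - 1) * (z i - τ)) 0 ^ p) := by
    intro σ τ h
    apply Finset.sum_le_sum
    intro i _
    apply Real.rpow_le_rpow (le_max_right _ _) _ hp0.le
    exact max_le_max (by nlinarith) le_rfl
  have hstrict : StrictAntiOn (fun τ => ∑ i, max ((α - 1) * (z i - τ)) 0 ^ p)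
      {τ | 0 < ∑ i, max ((α - 1) * (z i - τ)) 0 ^ p} := by
    intro σ hσ τ hτ hlt
    have hτ' : (0:ℝ) < ∑ i, max ((α - 1) * (z i - τ)) 0 ^ p := hτ
    obtain ⟨i, -, hi⟩ := Finset.exists_lt_of_sum_lt (f := fun _ : Fin d => (0:ℝ))
      (by simpa using hτ')
    have hb : 0 < max ((α - 1) * (z i - τ)) 0 := by
      rcases (le_max_right ((α - 1) * (z i - τ)) 0).eq_or_lt with h0 | h0
      · rw [← h0] at hi; simp [Real.zero_rpow hp0.ne'] at hi
      · exact h0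
    have hbase : 0 < (α - 1) * (z i - τ) := by
      rcases lt_max_iff.mp hb with h | h
      · exact h
      · exact absurd h (lt_irrefl _)
    have h2 : (α - 1) * (z i - τ) < (α - 1) * (z i - σ) := by nlinarith
    apply Finset.sum_lt_sum
    · intro j _
      apply Real.rpow_le_rpow (le_max_right _ _) _ hp0.le
      exact max_le_max (by nlinarith) le_rfl
    · refine ⟨i, Finset.mem_univ i, ?_⟩
      apply Real.rpow_lt_rpow (le_max_right _ _) _ hp0
      rw [max_eq_left hbase.le, max_eq_left (hbase.le.trans h2.le)]
      exact h2
  have htend : Filter.Tendsto (fun τ => ∑ i, max ((α - 1) * (z i - τ)) 0 ^ p)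
      Filter.atBot Filter.atTop := by
    apply Filter.tendsto_atTop_mono
      (fun τ => Finset.single_le_sum (f := fun i => max ((α - 1) * (z i - τ)) 0 ^ p)
        (fun j _ => Real.rpow_nonneg (le_max_right _ _) p) (Finset.mem_univ ⟨0, hd⟩))
    apply (tendsto_rpow_atTop hp0).comp
    apply Filter.tendsto_atTop_mono (fun τ => le_max_left ((α - 1) * (z ⟨0, hd⟩ - τ)) 0)
    have hsub : Filter.Tendsto (fun τ : ℝ => z ⟨0, hd⟩ - τ) Filter.atBot Filter.atTop := by
      have := Filter.tendsto_atTop_add_const_left (f := fun τ : ℝ => -τ) Filter.atBot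
        (z ⟨0, hd⟩) Filter.tendsto_neg_atBot_atTop
      simpa [sub_eq_add_neg] using this
    exact Filter.Tendsto.const_mul_atTop hα1 hsub
  have hzero : ∀ τ, (∀ i, z i ≤ τ) → (∑ i, max ((α - 1) * (z i - τ)) 0 ^ p) = 0 := by
    intro τ h
    apply Finset.sum_eq_zero
    intro i _
    rw [max_eq_right (by nlinarith [h i]), Real.zero_rpow hp0.ne']
  refine ⟨hcont, hanti, hstrict, htend, hzero, ?_⟩
  set M := Finset.univ.sup' Finset.univ_nonempty z with hM
  have hM0 : (∑ i, max ((α - 1) * (z i - M)) 0 ^ p) = 0 :=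
    hzero M (fun i => Finset.le_sup' z (Finset.mem_univ i))
  obtain ⟨σ, hσ⟩ := (htend.eventually_ge_atTop 1).exists
  have hσ'1 : 1 ≤ ∑ i, max ((α - 1) * (z i - min σ M)) 0 ^ p :=
    le_trans hσ (hanti (min_le_left _ _))
  obtain ⟨τ, -, hτ1⟩ := intermediate_value_Icc' (min_le_right σ M) hcont.continuousOn
    (Set.mem_Icc.mpr ⟨by rw [hM0]; exact zero_le_one, hσ'1⟩ : (1:ℝ) ∈ Set.Icc _ _)
  have hmem : ∀ x, (∑ i, max ((α - 1) * (z i - x)) 0 ^ p) = 1 →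
      x ∈ {τ | 0 < ∑ i, max ((α - 1) * (z i - τ)) 0 ^ p} := by
    intro x hx
    simp only [Set.mem_setOf_eq, hx]
    exact zero_lt_one
  exact ⟨τ, hτ1, fun y hy => hstrict.injOn (hmem y hy) (hmem τ hτ1) (hy.trans hτ1.symm)⟩
end
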